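/- For every γ strictly between 𝒩(0) = ‖F‖_F/√ℓ and σ_max(F), there is a unique q_γ ∈ (0, σ_max(F)^{−2}) with 𝒩(q_γ) = γ, and the function q ↦ 𝔄(q,γ) attains its maximum over [0, σ_max(F)^{−2}) at q = q_γ, with maximal value 𝔄(q_γ, γ) = 𝒜(q_γ). -/

import Mathlib

open MeasureTheory Real Matrix

/-- The largest singular value of `F`: the supremum of `‖F w‖` over unit vectors. -/
noncomputable def sigmaMax {s ℓ : ℕ} (F : Matrix (Fin s) (Fin ℓ) ℝ) : ℝ :=
  sSup {x : ℝ | ∃ w : Fin ℓ → ℝ, (∑ i, (w i)^2) = 1 ∧ x = Real.sqrt (∑ j, (F.mulVec w j)^2)}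

/-- `S(q) = (I − qΛ)⁻¹` with `Λ = FᵀF`. -/
noncomputable def Sq {s ℓ : ℕ} (F : Matrix (Fin s) (Fin ℓ) ℝ) (q : ℝ) :
    Matrix (Fin ℓ) (Fin ℓ) ℝ :=
  (1 - q • (Fᵀ * F))⁻¹

/-- `𝒜(q) = −(1/2)·ln det(ℓ·S(q)/Tr S(q))`. -/
noncomputable def Afun {s ℓ : ℕ} (F : Matrix (Fin s) (Fin ℓ) ℝ) (q : ℝ) : ℝ :=
  -(1 / 2) * Real.log ((((ℓ : ℝ) / (Sq F q).trace) • Sq F q).det)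

/-- `𝒩(q) = sqrt(Tr(Λ·S(q))/Tr S(q))`. -/
noncomputable def Nfun {s ℓ : ℕ} (F : Matrix (Fin s) (Fin ℓ) ℝ) (q : ℝ) : ℝ :=
  Real.sqrt ((Fᵀ * F * Sq F q).trace / (Sq F q).trace)

/-- `𝔄(q,γ) = (1/2)·ln det(I − qΛ) − (ℓ/2)·ln(1 − qγ²)`. -/
noncomputable def AAfun {s ℓ : ℕ} (F : Matrix (Fin s) (Fin ℓ) ℝ) (q γ : ℝ) : ℝ :=
  (1 / 2) * Real.log (1 - q • (Fᵀ * F)).det - ((ℓ : ℝ) / 2) * Real.log (1 - q * γ^2)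

/-- Frobenius norm of a matrix. -/
noncomputable def frobNorm {s ℓ : ℕ} (F : Matrix (Fin s) (Fin ℓ) ℝ) : ℝ :=
  Real.sqrt ((Fᵀ * F).trace)

/-! ### Auxiliary scalar analysis -/

namespace AAscalar
open Finset
variable {l : ℕ}

noncomputable def psi (μ : Fin l → ℝ) (q : ℝ) : ℝ := ∑ i, (1 - q * μ i)⁻¹
noncomputable def phi (μ : Fin l → ℝ) (q : ℝ) : ℝ := ∑ i, μ i * (1 - q * μ i)⁻¹
noncomputable def ff (μ : Fin l → ℝ) (q : ℝ) : ℝ := phi μ q / psi μ q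
noncomputable def AAs (μ : Fin l → ℝ) (γsq q : ℝ) : ℝ :=
  (1/2) * ∑ i, Real.log (1 - q * μ i) - ((l:ℝ)/2) * Real.log (1 - q * γsq)

variable {μ : Fin l → ℝ} {M : ℝ}

lemma den_pos (hM : ∀ i, μ i ≤ M) (hMpos : 0 < M) {q : ℝ}
    (hq : q ∈ Set.Ico (0:ℝ) M⁻¹) (i : Fin l) : 0 < 1 - q * μ i := by
  have h1 : q * μ i ≤ q * M := mul_le_mul_of_nonneg_left (hM i) hq.1
  have h2 : q * M < M⁻¹ * M := mul_lt_mul_of_pos_right hq.2 hMpos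
  rw [inv_mul_cancel₀ (ne_of_gt hMpos)] at h2
  linarith

lemma psi_pos (hM : ∀ i, μ i ≤ M) (hMpos : 0 < M) (hl : 0 < l) {q : ℝ}
    (hq : q ∈ Set.Ico (0:ℝ) M⁻¹) : 0 < psi μ q := by
  apply Finset.sum_pos (fun i _ => inv_pos.2 (den_pos hM hMpos hq i))
  exact Finset.univ_nonempty_iff.2 ⟨⟨0, hl⟩⟩

lemma phi_nonneg (hμ0 : ∀ i, 0 ≤ μ i) (hM : ∀ i, μ i ≤ M) (hMpos : 0 < M) {q : ℝ}
    (hq : q ∈ Set.Ico (0:ℝ) M⁻¹) : 0 ≤ phi μ q :=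
  Finset.sum_nonneg fun i _ => mul_nonneg (hμ0 i) (le_of_lt (inv_pos.2 (den_pos hM hMpos hq i)))

lemma psi_sub {q : ℝ} (hq : ∀ i, (1:ℝ) - q * μ i ≠ 0) : psi μ q - l = q * phi μ q := by
  have hc : (l:ℝ) = ∑ _i : Fin l, (1:ℝ) := by simp
  rw [psi, phi, hc, ← Finset.sum_sub_distrib, Finset.mul_sum]
  refine Finset.sum_congr rfl fun i _ => ?_
  field_simp [hq i]
  ring

lemma gam_den_pos (hMpos : 0 < M) {γsq q : ℝ} (hγM : γsq < M)
    (hq : q ∈ Set.Ico (0:ℝ) M⁻¹) : 0 < 1 - q * γsq := by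
  have h1 : q * γsq ≤ q * M := mul_le_mul_of_nonneg_left (le_of_lt hγM) hq.1
  have h2 : q * M < M⁻¹ * M := mul_lt_mul_of_pos_right hq.2 hMpos
  rw [inv_mul_cancel₀ (ne_of_gt hMpos)] at h2
  linarith

lemma cross_lt (hM : ∀ i, μ i ≤ M) (hMpos : 0 < M) {q1 q2 : ℝ}
    (h1 : q1 ∈ Set.Ico (0:ℝ) M⁻¹) (h2 : q2 ∈ Set.Ico (0:ℝ) M⁻¹)
    (h12 : q1 < q2) (hne : ∃ i j : Fin l, μ i ≠ μ j) :
    phi μ q1 * psi μ q2 < phi μ q2 * psi μ q1 := by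
  set a : Fin l → ℝ := fun i => (1 - q1 * μ i)⁻¹ with ha
  set b : Fin l → ℝ := fun i => (1 - q2 * μ i)⁻¹ with hb
  have hap : ∀ i, 0 < a i := fun i => inv_pos.2 (den_pos hM hMpos h1 i)
  have hbp : ∀ i, 0 < b i := fun i => inv_pos.2 (den_pos hM hMpos h2 i)
  have key : 2 * (phi μ q1 * psi μ q2 - phi μ q2 * psi μ q1)
      = ∑ i, ∑ j, (q1 - q2) * (μ i - μ j)^2 * (a i * a j * b i * b j) := by
    have e1 : phi μ q1 * psi μ q2 = ∑ i, ∑ j, μ i * a i * b j := by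
      rw [phi, psi, Finset.sum_mul_sum]
    have e2 : phi μ q2 * psi μ q1 = ∑ i, ∑ j, μ i * b i * a j := by
      rw [phi, psi, Finset.sum_mul_sum]
    have e3 : ∑ i, ∑ j, (μ i * a i * b j - μ i * b i * a j)
        = ∑ i, ∑ j, (μ j * a j * b i - μ j * b j * a i) := by
      rw [Finset.sum_comm]
    have e4 : ∀ i j : Fin l, (μ i * a i * b j - μ i * b i * a j) + (μ j * a j * b i - μ j * b j * a i)
        = (q1 - q2) * (μ i - μ j)^2 * (a i * a j * b i * b j) := by
      intro i j
      have di : (1 - q1 * μ i) ≠ 0 := ne_of_gt (den_pos hM hMpos h1 i)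
      have dj : (1 - q1 * μ j) ≠ 0 := ne_of_gt (den_pos hM hMpos h1 j)
      have ei : (1 - q2 * μ i) ≠ 0 := ne_of_gt (den_pos hM hMpos h2 i)
      have ej : (1 - q2 * μ j) ≠ 0 := ne_of_gt (den_pos hM hMpos h2 j)
      have di' : 1 - μ i * q1 ≠ 0 := by rwa [mul_comm]
      have dj' : 1 - μ j * q1 ≠ 0 := by rwa [mul_comm]
      have ei' : 1 - μ i * q2 ≠ 0 := by rwa [mul_comm]
      have ej' : 1 - μ j * q2 ≠ 0 := by rwa [mul_comm]
      rw [ha, hb]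
      field_simp
      ring
    calc 2 * (phi μ q1 * psi μ q2 - phi μ q2 * psi μ q1)
        = (∑ i, ∑ j, (μ i * a i * b j - μ i * b i * a j))
          + ∑ i, ∑ j, (μ j * a j * b i - μ j * b j * a i) := by
          rw [← e3, e1, e2]
          simp only [← Finset.sum_sub_distrib]
          ring
      _ = ∑ i, ∑ j, ((μ i * a i * b j - μ i * b i * a j) + (μ j * a j * b i - μ j * b j * a i)) := by
          simp only [← Finset.sum_add_distrib]
      _ = _ := Finset.sum_congr rfl fun i _ => Finset.sum_congr rfl fun j _ => e4 i j
  have hneg : ∑ i, ∑ j, (q1 - q2) * (μ i - μ j)^2 * (a i * a j * b i * b j) < 0 := by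
    obtain ⟨i0, j0, hij⟩ := hne
    have hterm : ∀ i j : Fin l, (q1 - q2) * (μ i - μ j)^2 * (a i * a j * b i * b j) ≤ 0 := by
      intro i j
      apply mul_nonpos_of_nonpos_of_nonneg
      · exact mul_nonpos_of_nonpos_of_nonneg (by linarith) (sq_nonneg _)
      · exact le_of_lt (mul_pos (mul_pos (mul_pos (hap i) (hap j)) (hbp i)) (hbp j))
    have hstrict : (q1 - q2) * (μ i0 - μ j0)^2 * (a i0 * a j0 * b i0 * b j0) < 0 := by
      apply mul_neg_of_neg_of_pos
      · apply mul_neg_of_neg_of_pos (by linarith)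
        exact lt_of_le_of_ne (sq_nonneg _) (Ne.symm (pow_ne_zero 2 (sub_ne_zero.2 hij)))
      · exact mul_pos (mul_pos (mul_pos (hap i0) (hap j0)) (hbp i0)) (hbp j0)
    calc ∑ i, ∑ j, (q1 - q2) * (μ i - μ j)^2 * (a i * a j * b i * b j)
        < ∑ _i : Fin l, ∑ _j : Fin l, (0:ℝ) := by
          apply Finset.sum_lt_sum
          · intro i _
            exact Finset.sum_le_sum fun j _ => hterm i j
          · refine ⟨i0, Finset.mem_univ _, ?_⟩
            apply Finset.sum_lt_sum
            · intro j _; exact hterm i0 j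
            · exact ⟨j0, Finset.mem_univ _, hstrict⟩
      _ = 0 := by simp
  linarith

lemma ff_strictMonoOn (hM : ∀ i, μ i ≤ M) (hMpos : 0 < M) (hl : 0 < l)
    (hne : ∃ i j : Fin l, μ i ≠ μ j) :
    StrictMonoOn (ff μ) (Set.Ico (0:ℝ) M⁻¹) := by
  intro q1 h1 q2 h2 h12
  rw [ff, ff, div_lt_div_iff₀ (psi_pos hM hMpos hl h1) (psi_pos hM hMpos hl h2)]
  exact cross_lt hM hMpos h1 h2 h12 hne

lemma exists_q0 (hμ0 : ∀ i, 0 ≤ μ i) (hM : ∀ i, μ i ≤ M) (hMpos : 0 < M)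
    (k : Fin l) (hk : μ k = M) (γsq : ℝ) (hγ0 : 0 ≤ γsq) (hγM : γsq < M) :
    ∃ q0 ∈ Set.Ioo (0:ℝ) M⁻¹, γsq * psi μ q0 < phi μ q0 := by
  have hεpos : 0 < M - γsq := by linarith
  set B := ∑ i, (if μ i = M then 0 else γsq * (M / (M - μ i))) with hB
  have hBi : ∀ i : Fin l, 0 ≤ (if μ i = M then 0 else γsq * (M / (M - μ i))) := by
    intro i
    by_cases hi : μ i = M
    · simp [hi]
    · rw [if_neg hi]
      have h1 : 0 < M - μ i := sub_pos.2 (lt_of_le_of_ne (hM i) hi)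
      positivity
  have hBpos : 0 ≤ B := Finset.sum_nonneg fun i _ => hBi i
  set t := min (1/2 : ℝ) ((M - γsq) / (2*(B+1))) with ht
  have htpos : 0 < t := lt_min (by norm_num) (div_pos hεpos (by linarith))
  have ht2 : t ≤ 1/2 := min_le_left _ _
  have ht3 : t ≤ (M - γsq) / (2*(B+1)) := min_le_right _ _
  set q0 := (1 - t)/M with hq0def
  have hq0pos : 0 < q0 := div_pos (by linarith) hMpos
  have hq0M : q0 * M = 1 - t := by
    rw [hq0def]; field_simp
  have hq0lt : q0 < M⁻¹ := by
    have h1 : q0 * M < M⁻¹ * M := by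
      rw [hq0M, inv_mul_cancel₀ (ne_of_gt hMpos)]; linarith
    exact lt_of_mul_lt_mul_right h1 (le_of_lt hMpos)
  have hq0mem : q0 ∈ Set.Ico (0:ℝ) M⁻¹ := ⟨le_of_lt hq0pos, hq0lt⟩
  have hden : ∀ i, 0 < 1 - q0 * μ i := den_pos hM hMpos hq0mem
  have hbound : ∀ i : Fin l,
      -(if μ i = M then 0 else γsq * (M / (M - μ i))) ≤ (μ i - γsq) * (1 - q0 * μ i)⁻¹ := by
    intro i
    by_cases hi : μ i = M
    · rw [if_pos hi, neg_zero]
      exact mul_nonneg (by rw [hi]; linarith) (le_of_lt (inv_pos.2 (hden i)))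
    · rw [if_neg hi]
      have hlt : μ i < M := lt_of_le_of_ne (hM i) hi
      have hMd : 0 < M - μ i := sub_pos.2 hlt
      by_cases h2 : γsq ≤ μ i
      · have : (0:ℝ) ≤ (μ i - γsq) * (1 - q0 * μ i)⁻¹ :=
          mul_nonneg (by linarith) (le_of_lt (inv_pos.2 (hden i)))
        have h3 : (0:ℝ) ≤ γsq * (M / (M - μ i)) := by positivity
        linarith
      · push_neg at h2
        have hai : (1 - q0 * μ i)⁻¹ ≤ M / (M - μ i) := by
          have hstep : (M - μ i)/M ≤ 1 - q0 * μ i := by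
            have h6 : q0 * μ i ≤ M⁻¹ * μ i :=
              mul_le_mul_of_nonneg_right (le_of_lt hq0lt) (hμ0 i)
            have h4 : M⁻¹ * μ i = μ i / M := by rw [inv_mul_eq_div]
            have h5 : (M - μ i)/M = 1 - μ i / M := by field_simp
            rw [h4] at h6
            linarith
          have hpos2 : 0 < (M - μ i)/M := div_pos hMd hMpos
          calc (1 - q0 * μ i)⁻¹ ≤ ((M - μ i)/M)⁻¹ := by
                exact inv_anti₀ hpos2 hstep
            _ = M / (M - μ i) := by rw [inv_div]
        have hinv : 0 < (1 - q0 * μ i)⁻¹ := inv_pos.2 (hden i)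
        have : (γsq - μ i) * (1 - q0 * μ i)⁻¹ ≤ γsq * (M / (M - μ i)) := by
          calc (γsq - μ i) * (1 - q0 * μ i)⁻¹ ≤ γsq * (1 - q0 * μ i)⁻¹ :=
                mul_le_mul_of_nonneg_right (by linarith [hμ0 i]) (le_of_lt hinv)
            _ ≤ γsq * (M / (M - μ i)) := mul_le_mul_of_nonneg_left hai hγ0
        nlinarith
  have hdiff : phi μ q0 - γsq * psi μ q0 = ∑ i, (μ i - γsq) * (1 - q0 * μ i)⁻¹ := by
    rw [phi, psi, Finset.mul_sum, ← Finset.sum_sub_distrib]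
    exact Finset.sum_congr rfl fun i _ => by ring
  have hksplit : ∑ i, (μ i - γsq) * (1 - q0 * μ i)⁻¹
      = (μ k - γsq) * (1 - q0 * μ k)⁻¹ + ∑ i ∈ Finset.univ.erase k, (μ i - γsq) * (1 - q0 * μ i)⁻¹ :=
    (Finset.add_sum_erase _ _ (Finset.mem_univ k)).symm
  have hkterm : (μ k - γsq) * (1 - q0 * μ k)⁻¹ = (M - γsq) * t⁻¹ := by
    rw [hk, show (1 : ℝ) - q0 * M = t by rw [hq0M]; ring]
  have hkbig : 2*(B+1) ≤ (M - γsq) * t⁻¹ := by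
    have h1 : t * (2*(B+1)) ≤ M - γsq := (le_div_iff₀ (by linarith)).mp ht3
    rw [← div_eq_mul_inv, le_div_iff₀ htpos]
    linarith
  have herase : -B ≤ ∑ i ∈ Finset.univ.erase k, (μ i - γsq) * (1 - q0 * μ i)⁻¹ := by
    have h1 : ∑ i ∈ Finset.univ.erase k, (-(if μ i = M then 0 else γsq * (M / (M - μ i))))
        ≤ ∑ i ∈ Finset.univ.erase k, (μ i - γsq) * (1 - q0 * μ i)⁻¹ :=
      Finset.sum_le_sum fun i _ => hbound i
    have h2 : ∑ i ∈ Finset.univ.erase k, (if μ i = M then 0 else γsq * (M / (M - μ i))) ≤ B :=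
      Finset.sum_le_sum_of_subset_of_nonneg (Finset.subset_univ _) (fun i _ _ => hBi i)
    have h3 : ∑ i ∈ Finset.univ.erase k, (-(if μ i = M then 0 else γsq * (M / (M - μ i))))
        = -∑ i ∈ Finset.univ.erase k, (if μ i = M then 0 else γsq * (M / (M - μ i))) := by
      rw [Finset.sum_neg_distrib]
    linarith
  refine ⟨q0, ⟨hq0pos, hq0lt⟩, ?_⟩
  have hfinal : 0 < phi μ q0 - γsq * psi μ q0 := by
    rw [hdiff, hksplit, hkterm]
    linarith
  linarith

lemma exists_root (hM : ∀ i, μ i ≤ M) (hMpos : 0 < M) {q0 γsq : ℝ}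
    (hq0 : q0 ∈ Set.Ioo (0:ℝ) M⁻¹)
    (h0 : phi μ 0 < γsq * psi μ 0) (h1 : γsq * psi μ q0 < phi μ q0) :
    ∃ qg ∈ Set.Ioo (0:ℝ) q0, phi μ qg = γsq * psi μ qg := by
  set g : ℝ → ℝ := fun q => phi μ q - γsq * psi μ q with hg
  have hsub : Set.Icc (0:ℝ) q0 ⊆ Set.Ico (0:ℝ) M⁻¹ :=
    fun x hx => ⟨hx.1, lt_of_le_of_lt hx.2 hq0.2⟩
  have hcphi : ContinuousOn (phi μ) (Set.Icc (0:ℝ) q0) := by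
    apply continuousOn_finset_sum
    intro i _
    exact continuousOn_const.mul (((continuousOn_const.sub
      ((continuous_id.mul continuous_const).continuousOn))).inv₀
      (fun x hx => ne_of_gt (den_pos hM hMpos (hsub hx) i)))
  have hcpsi : ContinuousOn (psi μ) (Set.Icc (0:ℝ) q0) := by
    apply continuousOn_finset_sum
    intro i _
    exact ((continuousOn_const.sub
      ((continuous_id.mul continuous_const).continuousOn))).inv₀
      (fun x hx => ne_of_gt (den_pos hM hMpos (hsub hx) i))
  have hcg : ContinuousOn g (Set.Icc (0:ℝ) q0) := hcphi.sub (continuousOn_const.mul hcpsi)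
  have hmem : (0:ℝ) ∈ Set.Ioo (g 0) (g q0) := ⟨by simp [hg]; linarith, by simp [hg]; linarith⟩
  obtain ⟨qg, hqg, hv⟩ := intermediate_value_Ioo (le_of_lt hq0.1) hcg hmem
  exact ⟨qg, hqg, by simp [hg] at hv; linarith⟩

lemma hasDerivAt_AAs (hM : ∀ i, μ i ≤ M) (hMpos : 0 < M) {γsq q : ℝ}
    (hγM : γsq < M) (hq : q ∈ Set.Ico (0:ℝ) M⁻¹) :
    HasDerivAt (AAs μ γsq) (((l:ℝ)/2) * (γsq / (1 - q*γsq)) - (1/2) * phi μ q) q := by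
  have hlog : ∀ c : ℝ, (1 - q * c) ≠ 0 →
      HasDerivAt (fun x => Real.log (1 - x * c)) (-c / (1 - q * c)) q := by
    intro c hc
    have h1 : HasDerivAt (fun x : ℝ => 1 - x * c) (-c) q := by
      simpa using ((hasDerivAt_id q).mul_const c).const_sub 1
    simpa [div_eq_mul_inv] using h1.log hc
  have hsum : HasDerivAt (fun x => ∑ i, Real.log (1 - x * μ i))
      (∑ i, -μ i / (1 - q * μ i)) q :=
    HasDerivAt.fun_sum (fun i _ => hlog (μ i) (ne_of_gt (den_pos hM hMpos hq i)))
  have hgam : HasDerivAt (fun x => Real.log (1 - x * γsq)) (-γsq / (1 - q * γsq)) q :=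
    hlog γsq (ne_of_gt (gam_den_pos hMpos hγM hq))
  have h := (hsum.const_mul (1/2 : ℝ)).sub (hgam.const_mul ((l:ℝ)/2))
  refine h.congr_deriv ?_
  have e : ∑ i, -μ i/(1 - q * μ i) = -∑ i, μ i * (1 - q * μ i)⁻¹ := by
    rw [← Finset.sum_neg_distrib]
    exact Finset.sum_congr rfl fun i _ => by rw [div_eq_mul_inv]; ring
  rw [phi, e]
  ring

lemma deriv_sign_pos (hM : ∀ i, μ i ≤ M) (hMpos : 0 < M) {γsq q : ℝ}
    (hγM : γsq < M) (hq : q ∈ Set.Ico (0:ℝ) M⁻¹)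
    (hlt : phi μ q < γsq * psi μ q) :
    0 < ((l:ℝ)/2) * (γsq / (1 - q*γsq)) - (1/2) * phi μ q := by
  have hs : psi μ q - l = q * phi μ q :=
    psi_sub (fun i => ne_of_gt (den_pos hM hMpos hq i))
  have hgd : 0 < 1 - q * γsq := gam_den_pos hMpos hγM hq
  have e : phi μ q * (1 - q*γsq) = (phi μ q - γsq * psi μ q) + γsq * l
      + γsq * ((psi μ q - (l:ℝ)) - q * phi μ q) := by ring
  have key : phi μ q * (1 - q*γsq) < (l:ℝ) * γsq := by
    rw [e]; rw [hs]; ring_nf; nlinarith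
  have h3 : phi μ q < (l:ℝ) * γsq / (1 - q*γsq) := (lt_div_iff₀ hgd).2 key
  have e2 : ((l:ℝ)/2) * (γsq/(1 - q*γsq)) = ((l:ℝ)*γsq/(1 - q*γsq))/2 := by ring
  linarith

lemma deriv_sign_neg (hM : ∀ i, μ i ≤ M) (hMpos : 0 < M) {γsq q : ℝ}
    (hγM : γsq < M) (hq : q ∈ Set.Ico (0:ℝ) M⁻¹)
    (hlt : γsq * psi μ q < phi μ q) :
    ((l:ℝ)/2) * (γsq / (1 - q*γsq)) - (1/2) * phi μ q < 0 := by
  have hs : psi μ q - l = q * phi μ q :=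
    psi_sub (fun i => ne_of_gt (den_pos hM hMpos hq i))
  have hgd : 0 < 1 - q * γsq := gam_den_pos hMpos hγM hq
  have e : phi μ q * (1 - q*γsq) = (phi μ q - γsq * psi μ q) + γsq * l
      + γsq * ((psi μ q - (l:ℝ)) - q * phi μ q) := by ring
  have key : (l:ℝ) * γsq < phi μ q * (1 - q*γsq) := by
    rw [e]; rw [hs]; ring_nf; nlinarith
  have h3 : (l:ℝ) * γsq / (1 - q*γsq) < phi μ q := (div_lt_iff₀ hgd).2 key
  have e2 : ((l:ℝ)/2) * (γsq/(1 - q*γsq)) = ((l:ℝ)*γsq/(1 - q*γsq))/2 := by ring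
  linarith

lemma AAs_cont (hM : ∀ i, μ i ≤ M) (hMpos : 0 < M) {γsq : ℝ} (hγM : γsq < M)
    {s : Set ℝ} (hsub : s ⊆ Set.Ico (0:ℝ) M⁻¹) :
    ContinuousOn (AAs μ γsq) s := by
  apply ContinuousOn.sub
  · apply continuousOn_const.mul
    apply continuousOn_finset_sum
    intro i _
    exact ContinuousOn.log ((continuousOn_const.sub
      ((continuous_id.mul continuous_const).continuousOn)))
      (fun x hx => ne_of_gt (den_pos hM hMpos (hsub hx) i))
  · apply continuousOn_const.mul
    exact ContinuousOn.log ((continuousOn_const.sub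
      ((continuous_id.mul continuous_const).continuousOn)))
      (fun x hx => ne_of_gt (gam_den_pos hMpos hγM (hsub hx)))

lemma AAs_le (hM : ∀ i, μ i ≤ M) (hMpos : 0 < M) (hl : 0 < l)
    (hne : ∃ i j : Fin l, μ i ≠ μ j) {γsq : ℝ} (hγM : γsq < M)
    {qg : ℝ} (hqg : qg ∈ Set.Ioo (0:ℝ) M⁻¹) (hroot : phi μ qg = γsq * psi μ qg) :
    ∀ q ∈ Set.Ico (0:ℝ) M⁻¹, AAs μ γsq q ≤ AAs μ γsq qg := by
  intro q hq
  have hqgIco : qg ∈ Set.Ico (0:ℝ) M⁻¹ := ⟨le_of_lt hqg.1, hqg.2⟩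
  have hpsig : 0 < psi μ qg := psi_pos hM hMpos hl hqgIco
  rcases le_or_gt q qg with hle | hgt
  · have hsub : Set.Icc (0:ℝ) qg ⊆ Set.Ico (0:ℝ) M⁻¹ :=
      fun x hx => ⟨hx.1, lt_of_le_of_lt hx.2 hqg.2⟩
    have hmono : MonotoneOn (AAs μ γsq) (Set.Icc 0 qg) := by
      apply monotoneOn_of_deriv_nonneg (convex_Icc 0 qg)
        (AAs_cont hM hMpos hγM hsub)
      · intro x hx
        rw [interior_Icc] at hx
        exact ((hasDerivAt_AAs hM hMpos hγM (hsub (Set.mem_Icc_of_Ioo hx))).differentiableAt).differentiableWithinAt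
      · intro x hx
        rw [interior_Icc] at hx
        have hxI : x ∈ Set.Ico (0:ℝ) M⁻¹ := hsub (Set.mem_Icc_of_Ioo hx)
        have hcross := cross_lt hM hMpos hxI hqgIco hx.2 hne
        rw [hroot] at hcross
        have hpsix : 0 < psi μ x := psi_pos hM hMpos hl hxI
        have hlt : phi μ x < γsq * psi μ x := by
          have h7 := (mul_lt_mul_iff_left₀ hpsig).1
            (by linarith [hcross] : phi μ x * psi μ qg < (γsq * psi μ x) * psi μ qg)
          exact h7
        rw [(hasDerivAt_AAs hM hMpos hγM hxI).deriv]
        exact le_of_lt (deriv_sign_pos hM hMpos hγM hxI hlt)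
    exact hmono ⟨hq.1, hle⟩ ⟨le_of_lt hqg.1, le_refl qg⟩ hle
  · have hsub : Set.Icc qg q ⊆ Set.Ico (0:ℝ) M⁻¹ :=
      fun x hx => ⟨le_trans (le_of_lt hqg.1) hx.1, lt_of_le_of_lt hx.2 hq.2⟩
    have hanti : AntitoneOn (AAs μ γsq) (Set.Icc qg q) := by
      apply antitoneOn_of_deriv_nonpos (convex_Icc qg q)
        (AAs_cont hM hMpos hγM hsub)
      · intro x hx
        rw [interior_Icc] at hx
        exact ((hasDerivAt_AAs hM hMpos hγM (hsub (Set.mem_Icc_of_Ioo hx))).differentiableAt).differentiableWithinAt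
      · intro x hx
        rw [interior_Icc] at hx
        have hxI : x ∈ Set.Ico (0:ℝ) M⁻¹ := hsub (Set.mem_Icc_of_Ioo hx)
        have hcross := cross_lt hM hMpos hqgIco hxI hx.1 hne
        rw [hroot] at hcross
        have hpsix : 0 < psi μ x := psi_pos hM hMpos hl hxI
        have hlt : γsq * psi μ x < phi μ x := by
          have h7 := (mul_lt_mul_iff_left₀ hpsig).1
            (by linarith [hcross] : (γsq * psi μ x) * psi μ qg < phi μ x * psi μ qg)
          exact h7
        rw [(hasDerivAt_AAs hM hMpos hγM hxI).deriv]
        exact le_of_lt (deriv_sign_neg hM hMpos hγM hxI hlt)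
    exact hanti ⟨le_refl qg, le_of_lt hgt⟩ ⟨le_of_lt hgt, le_refl q⟩ (le_of_lt hgt)

end AAscalar

/-! ### Matrix bridge -/

namespace AAaux
open Matrix
variable {s l : ℕ} (F : Matrix (Fin s) (Fin l) ℝ)

noncomputable def hH : (Fᵀ * F).IsHermitian := by
  simpa [conjTranspose_eq_transpose_of_trivial] using isHermitian_conjTranspose_mul_self F
noncomputable def UU : Matrix (Fin l) (Fin l) ℝ := ((hH F).eigenvectorUnitary : Matrix (Fin l) (Fin l) ℝ)
noncomputable def mu : Fin l → ℝ := (hH F).eigenvalues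

noncomputable def conj (d : Fin l → ℝ) : Matrix (Fin l) (Fin l) ℝ :=
  UU F * diagonal d * star (UU F)

lemma star_mul_selfU : star (UU F) * UU F = 1 := by simp [UU]
lemma mul_starU : UU F * star (UU F) = 1 := by simp [UU]

lemma spec : Fᵀ * F = conj F (mu F) := by
  have h := (hH F).spectral_theorem
  simpa [RCLike.ofReal_real_eq_id, UU, mu, conj] using h

lemma conj_mul (d e : Fin l → ℝ) : conj F d * conj F e = conj F (fun i => d i * e i) := by
  simp only [conj, Matrix.mul_assoc]
  rw [← Matrix.mul_assoc (star (UU F)) (UU F), star_mul_selfU, Matrix.one_mul,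
    ← Matrix.mul_assoc (diagonal d), diagonal_mul_diagonal]

lemma conj_one : conj F (fun _ => 1) = 1 := by
  rw [conj, diagonal_one, Matrix.mul_one, mul_starU]

lemma conj_const (c : ℝ) : conj F (fun _ => c) = c • 1 := by
  have h : diagonal (fun _ : Fin l => c) = c • (1 : Matrix (Fin l) (Fin l) ℝ) := by
    ext i j
    rcases eq_or_ne i j with rfl | hij
    · simp [Matrix.diagonal_apply_eq, Matrix.one_apply_eq]
    · simp [Matrix.diagonal_apply_ne _ hij, Matrix.one_apply_ne hij]
  rw [conj, h, Matrix.mul_smul, Matrix.smul_mul, Matrix.mul_one, mul_starU]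

lemma trace_conj (d : Fin l → ℝ) : (conj F d).trace = ∑ i, d i := by
  rw [conj, trace_mul_cycle, star_mul_selfU, Matrix.one_mul, trace_diagonal]

lemma det_conj (d : Fin l → ℝ) : (conj F d).det = ∏ i, d i := by
  rw [conj, det_mul_right_comm, mul_starU, Matrix.one_mul, det_diagonal]

lemma one_sub_smul (q : ℝ) : 1 - q • (Fᵀ * F) = conj F (fun i => 1 - q * mu F i) := by
  have h2 : diagonal (fun i => 1 - q * mu F i) =
      (1 : Matrix (Fin l) (Fin l) ℝ) - q • diagonal (mu F) := by
    rw [← diagonal_one, ← diagonal_smul, diagonal_sub]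
    congr 1
  rw [conj, h2, Matrix.mul_sub, Matrix.sub_mul, Matrix.mul_one, mul_starU,
    Matrix.mul_smul, Matrix.smul_mul]
  rw [show UU F * diagonal (mu F) * star (UU F) = Fᵀ * F from (spec F).symm]

lemma inv_conj (d : Fin l → ℝ) (hd : ∀ i, d i ≠ 0) : (conj F d)⁻¹ = conj F (fun i => (d i)⁻¹) := by
  apply inv_eq_right_inv
  rw [conj_mul]
  have h : (fun i => d i * (d i)⁻¹) = fun _ => (1:ℝ) := by
    funext i; simp [mul_inv_cancel₀ (hd i)]
  rw [h, conj_one]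

lemma Sq_eq (q : ℝ) (hd : ∀ i, 1 - q * mu F i ≠ 0) :
    (1 - q • (Fᵀ * F))⁻¹ = conj F (fun i => (1 - q * mu F i)⁻¹) := by
  rw [one_sub_smul, inv_conj F _ hd]

lemma trace_mul_Sq (q : ℝ) (hd : ∀ i, 1 - q * mu F i ≠ 0) :
    ((Fᵀ * F) * (1 - q • (Fᵀ * F))⁻¹).trace = ∑ i, mu F i * (1 - q * mu F i)⁻¹ := by
  rw [Sq_eq F q hd, spec F, conj_mul, trace_conj]

lemma trace_Sq (q : ℝ) (hd : ∀ i, 1 - q * mu F i ≠ 0) :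
    ((1 - q • (Fᵀ * F))⁻¹).trace = ∑ i, (1 - q * mu F i)⁻¹ := by
  rw [Sq_eq F q hd, trace_conj]

lemma det_one_sub (q : ℝ) : (1 - q • (Fᵀ * F)).det = ∏ i, (1 - q * mu F i) := by
  rw [one_sub_smul, det_conj]

lemma mu_nonneg (i : Fin l) : 0 ≤ mu F i := by
  have h : (Fᴴ * F).PosSemidef := posSemidef_conjTranspose_mul_self F
  have h2 : (Fᴴ * F) = Fᵀ * F := by
    have h3 : Fᴴ = Fᵀ := by ext a b; simp [conjTranspose_apply]
    rw [h3]
  exact (h2 ▸ h).eigenvalues_nonneg i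

lemma trace_lam : (Fᵀ * F).trace = ∑ i, mu F i := by
  rw [spec F, trace_conj]

lemma dp_diag (d v : Fin l → ℝ) : v ⬝ᵥ (diagonal d *ᵥ v) = ∑ i, d i * (v i)^2 := by
  simp [dotProduct, Matrix.mulVec_diagonal]
  exact Finset.sum_congr rfl fun i _ => by ring

lemma dp_self {a b : ℕ} (G : Matrix (Fin a) (Fin b) ℝ) (w : Fin b → ℝ) :
    ∑ j, ((G *ᵥ w) j)^2 = w ⬝ᵥ ((Gᵀ * G) *ᵥ w) := by
  have h1 : ∑ j, ((G *ᵥ w) j)^2 = (G *ᵥ w) ⬝ᵥ (G *ᵥ w) := by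
    simp [dotProduct, pow_two]
  rw [h1, ← Matrix.mulVec_mulVec, Matrix.mulVec_transpose, dotProduct_comm w,
    ← Matrix.dotProduct_mulVec]

lemma starU_transpose : (star (UU F))ᵀ = UU F := by
  ext i j; simp [Matrix.star_apply, Matrix.transpose_apply]

lemma vecMul_eq : ∀ w : Fin l → ℝ, w ᵥ* UU F = star (UU F) *ᵥ w := by
  intro w
  have h := Matrix.vecMul_transpose (star (UU F)) w
  rw [starU_transpose] at h
  exact h.symm ▸ rfl

lemma norm_pres (w : Fin l → ℝ) : ∑ i, ((star (UU F) *ᵥ w) i)^2 = ∑ i, (w i)^2 := by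
  rw [dp_self, starU_transpose, mul_starU]
  simp [dotProduct, pow_two]

lemma Utranspose_mul_self : (UU F)ᵀ * UU F = 1 := by
  have h := star_mul_selfU F
  have h2 : star (UU F) = (UU F)ᵀ := by
    ext i j; simp [Matrix.star_apply, Matrix.transpose_apply]
  rwa [h2] at h

lemma norm_pres' (v : Fin l → ℝ) : ∑ i, ((UU F *ᵥ v) i)^2 = ∑ i, (v i)^2 := by
  rw [dp_self, Utranspose_mul_self]
  simp [dotProduct, pow_two]

lemma quad_eq (w : Fin l → ℝ) :
    ∑ j, ((F *ᵥ w) j)^2 = ∑ i, mu F i * ((star (UU F) *ᵥ w) i)^2 := by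
  rw [dp_self]
  have h2 : Fᵀ * F = UU F * diagonal (mu F) * star (UU F) := by
    simpa [RCLike.ofReal_real_eq_id, UU, mu] using (hH F).spectral_theorem
  rw [h2, ← Matrix.mulVec_mulVec, ← Matrix.mulVec_mulVec,
    Matrix.dotProduct_mulVec w (UU F), vecMul_eq, dp_diag]

lemma exists_max (hl : 0 < l) : ∃ k : Fin l, ∀ i, mu F i ≤ mu F k := by
  have h : Nonempty (Fin l) := ⟨⟨0, hl⟩⟩
  exact Finite.exists_max (mu F)

lemma sigma_eq (k : Fin l) (hk : ∀ i, mu F i ≤ mu F k) :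
    sigmaMax F = Real.sqrt (mu F k) := by
  apply IsGreatest.csSup_eq
  constructor
  · refine ⟨UU F *ᵥ Pi.single k 1, ?_, ?_⟩
    · rw [norm_pres']
      simp [Pi.single_apply]
    · rw [quad_eq]
      have hv : star (UU F) *ᵥ (UU F *ᵥ Pi.single k 1) = Pi.single k 1 := by
        rw [Matrix.mulVec_mulVec, star_mul_selfU, Matrix.one_mulVec]
      rw [hv]
      congr 1
      simp [Pi.single_apply]
  · rintro x ⟨w, hw, rfl⟩
    apply Real.sqrt_le_sqrt
    rw [quad_eq]
    calc ∑ i, mu F i * ((star (UU F) *ᵥ w) i)^2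
        ≤ ∑ i, mu F k * ((star (UU F) *ᵥ w) i)^2 := by
          apply Finset.sum_le_sum
          intro i _
          exact mul_le_mul_of_nonneg_right (hk i) (sq_nonneg _)
      _ = mu F k := by rw [← Finset.mul_sum, norm_pres F w, hw, mul_one]

lemma Nfun_eq (q : ℝ) (hd : ∀ i, 1 - q * mu F i ≠ 0) :
    Nfun F q = Real.sqrt (AAscalar.phi (mu F) q / AAscalar.psi (mu F) q) := by
  simp only [Nfun, Sq]
  rw [trace_mul_Sq F q hd, trace_Sq F q hd]
  rfl

lemma AAfun_eq (γ q : ℝ) (hd : ∀ i, 1 - q * mu F i ≠ 0) :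
    AAfun F q γ = AAscalar.AAs (mu F) (γ^2) q := by
  simp only [AAfun, AAscalar.AAs]
  rw [det_one_sub, Real.log_prod (fun i _ => hd i)]

end AAaux

/-- For every `γ` strictly between `𝒩(0) = ‖F‖_F/√ℓ` and `σ_max(F)`, there is a
unique `q_γ ∈ (0, σ_max(F)^{−2})` with `𝒩(q_γ) = γ`, and `q ↦ 𝔄(q,γ)` attains its
maximum over `[0, σ_max(F)^{−2})` at `q = q_γ`, with maximal value `𝒜(q_γ)`. -/
theorem AAfun_max
    (s ℓ : ℕ) (F : Matrix (Fin s) (Fin ℓ) ℝ)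
    (hΛ : ∀ c : ℝ, Fᵀ * F ≠ c • (1 : Matrix (Fin ℓ) (Fin ℓ) ℝ))
    (γ : ℝ) (hγ₁ : frobNorm F / Real.sqrt ℓ < γ) (hγ₂ : γ < sigmaMax F) :
    ∃ qγ ∈ Set.Ioo (0 : ℝ) ((sigmaMax F ^ 2)⁻¹),
      Nfun F qγ = γ ∧
      (∀ q' ∈ Set.Ioo (0 : ℝ) ((sigmaMax F ^ 2)⁻¹), Nfun F q' = γ → q' = qγ) ∧
      (∀ q ∈ Set.Ico (0 : ℝ) ((sigmaMax F ^ 2)⁻¹), AAfun F q γ ≤ AAfun F qγ γ) ∧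
      AAfun F qγ γ = Afun F qγ := by
  classical
  rcases Nat.eq_zero_or_pos ℓ with h0 | hl
  · exfalso
    subst h0
    exact hΛ 0 (by ext i j; exact i.elim0)
  obtain ⟨k, hk⟩ := AAaux.exists_max F hl
  set μ : Fin ℓ → ℝ := AAaux.mu F with hμdef
  set M : ℝ := μ k with hMdef
  have hμ0 : ∀ i, 0 ≤ μ i := AAaux.mu_nonneg F
  have hM : ∀ i, μ i ≤ M := hk
  have hne : ∃ i j, μ i ≠ μ j := by
    by_contra hcon
    push_neg at hcon
    apply hΛ (μ k)
    rw [AAaux.spec F]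
    have hconst : AAaux.mu F = fun _ => μ k := funext fun i => hcon i k
    rw [hconst]
    exact AAaux.conj_const F (μ k)
  have hMpos : 0 < M := by
    rcases lt_or_ge 0 M with h | h
    · exact h
    · exfalso
      obtain ⟨i, j, hij⟩ := hne
      have hz : ∀ i, μ i = 0 := fun i => le_antisymm (le_trans (hM i) h) (hμ0 i)
      exact hij (by rw [hz i, hz j])
  have hσ : sigmaMax F = Real.sqrt M := AAaux.sigma_eq F k hk
  have hσ2 : sigmaMax F ^ 2 = M := by rw [hσ, Real.sq_sqrt (le_of_lt hMpos)]
  rw [hσ2]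
  -- facts about γ
  have hγpos : 0 < γ :=
    lt_of_le_of_lt (div_nonneg (Real.sqrt_nonneg _) (Real.sqrt_nonneg _)) hγ₁
  have hγM : γ^2 < M := by
    rw [hσ] at hγ₂
    exact (Real.lt_sqrt (le_of_lt hγpos)).1 hγ₂
  have hγsq0 : 0 ≤ γ^2 := sq_nonneg γ
  -- starting point condition
  have hsum_nonneg : 0 ≤ ∑ i, μ i := Finset.sum_nonneg fun i _ => hμ0 i
  have hsum_lt : ∑ i, μ i < γ^2 * ℓ := by
    have h1 : frobNorm F / Real.sqrt ℓ = Real.sqrt ((∑ i, μ i)/(ℓ:ℝ)) := by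
      rw [frobNorm, AAaux.trace_lam F, Real.sqrt_div hsum_nonneg]
    rw [h1] at hγ₁
    have h2 : (∑ i, μ i)/(ℓ:ℝ) < γ^2 := (Real.sqrt_lt' hγpos).1 hγ₁
    have hlpos : (0:ℝ) < (ℓ:ℝ) := Nat.cast_pos.2 hl
    calc ∑ i, μ i = ((∑ i, μ i)/(ℓ:ℝ)) * ℓ := by field_simp
      _ < γ^2 * ℓ := mul_lt_mul_of_pos_right h2 hlpos
  have h0lt : AAscalar.phi μ 0 < γ^2 * AAscalar.psi μ 0 := by
    have e1 : AAscalar.phi μ 0 = ∑ i, μ i := by simp [AAscalar.phi]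
    have e2 : AAscalar.psi μ 0 = (ℓ:ℝ) := by simp [AAscalar.psi]
    rw [e1, e2]
    exact hsum_lt
  -- existence of the root
  obtain ⟨q0, hq0, hq0v⟩ :=
    AAscalar.exists_q0 hμ0 hM hMpos k hMdef.symm (γ^2) hγsq0 hγM
  obtain ⟨qγ, hqγ, hroot⟩ := AAscalar.exists_root hM hMpos hq0 h0lt hq0v
  have hqγI : qγ ∈ Set.Ioo (0:ℝ) M⁻¹ := ⟨hqγ.1, lt_trans hqγ.2 hq0.2⟩
  have hqγIco : qγ ∈ Set.Ico (0:ℝ) M⁻¹ := ⟨le_of_lt hqγI.1, hqγI.2⟩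
  have hd : ∀ q ∈ Set.Ico (0:ℝ) M⁻¹, ∀ i, (1:ℝ) - q * μ i ≠ 0 :=
    fun q hq i => ne_of_gt (AAscalar.den_pos hM hMpos hq i)
  have hψpos : 0 < AAscalar.psi μ qγ := AAscalar.psi_pos hM hMpos hl hqγIco
  refine ⟨qγ, hqγI, ?_, ?_, ?_, ?_⟩
  · -- Nfun F qγ = γ
    rw [AAaux.Nfun_eq F qγ (hd qγ hqγIco)]
    rw [show AAscalar.phi (AAaux.mu F) qγ = γ^2 * AAscalar.psi (AAaux.mu F) qγ from hroot]
    rw [mul_div_assoc, div_self (ne_of_gt hψpos), mul_one, Real.sqrt_sq (le_of_lt hγpos)]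
  · -- uniqueness
    intro q' hq' hN
    have hq'Ico : q' ∈ Set.Ico (0:ℝ) M⁻¹ := ⟨le_of_lt hq'.1, hq'.2⟩
    have hψ' : 0 < AAscalar.psi μ q' := AAscalar.psi_pos hM hMpos hl hq'Ico
    have hφ' : 0 ≤ AAscalar.phi μ q' := AAscalar.phi_nonneg hμ0 hM hMpos hq'Ico
    have hval : AAscalar.ff μ q' = AAscalar.ff μ qγ := by
      have e1 : AAscalar.ff μ q' = γ^2 := by
        have hNe := AAaux.Nfun_eq F q' (hd q' hq'Ico)
        rw [hN] at hNe
        have hnn : 0 ≤ AAscalar.phi μ q' / AAscalar.psi μ q' :=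
          div_nonneg hφ' (le_of_lt hψ')
        rw [AAscalar.ff, ← Real.sq_sqrt hnn, ← hNe]
      have e2 : AAscalar.ff μ qγ = γ^2 := by
        rw [AAscalar.ff, hroot, mul_div_assoc, div_self (ne_of_gt hψpos), mul_one]
      rw [e1, e2]
    exact (AAscalar.ff_strictMonoOn hM hMpos hl hne).injOn hq'Ico hqγIco hval
  · -- maximality
    intro q hq
    rw [AAaux.AAfun_eq F γ q (hd q hq), AAaux.AAfun_eq F γ qγ (hd qγ hqγIco)]
    exact AAscalar.AAs_le hM hMpos hl hne hγM hqγI hroot q hq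
  · -- value identity
    have hc : ((ℓ:ℝ))/(AAscalar.psi μ qγ) = 1 - qγ * γ^2 := by
      have hs : AAscalar.psi μ qγ - (ℓ:ℝ) = qγ * AAscalar.phi μ qγ :=
        AAscalar.psi_sub (hd qγ hqγIco)
      rw [hroot] at hs
      field_simp
      linarith
    have htr2 : (Sq F qγ).trace = AAscalar.psi μ qγ := AAaux.trace_Sq F qγ (hd qγ hqγIco)
    have hdet : (Sq F qγ).det = ∏ i, (1 - qγ * μ i)⁻¹ := by
      show ((1 - qγ • (Fᵀ * F))⁻¹).det = _
      rw [AAaux.Sq_eq F qγ (hd qγ hqγIco), AAaux.det_conj]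
    have hcpos : 0 < 1 - qγ * γ^2 := AAscalar.gam_den_pos hMpos hγM hqγIco
    have hppos : 0 < ∏ i, (1 - qγ * μ i) :=
      Finset.prod_pos fun i _ => AAscalar.den_pos hM hMpos hqγIco i
    have hipos : 0 < ∏ i, (1 - qγ * μ i)⁻¹ :=
      Finset.prod_pos fun i _ => inv_pos.2 (AAscalar.den_pos hM hMpos hqγIco i)
    rw [Afun, Matrix.det_smul, htr2, hdet, hc, Fintype.card_fin]
    rw [Real.log_mul (pow_ne_zero ℓ (ne_of_gt hcpos)) (ne_of_gt hipos), Real.log_pow]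
    rw [show ∏ i, (1 - qγ * μ i)⁻¹ = (∏ i, (1 - qγ * μ i))⁻¹ by rw [← Finset.prod_inv_distrib]]
    rw [Real.log_inv]
    rw [AAfun, AAaux.det_one_sub]
    ring
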